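/- arXiv:1206.1945 — 8 statements merged into one kernel-verified Lean document; each statement's English description precedes it below -/
import Mathlib

section
/- For every edge 2-coloring of the complete graph K_4 on four vertices, there exists a nontrivial color-preserving automorphism. (Consequently, no edge 2-coloring of K_4 is free of nontrivial color-preserving symmetries.) -/
private def g (a b c d e f : Bool) (u v : Fin 4) : Bool :=
  match u, v with
  | 0, 1 => a | 1, 0 => a
  | 0, 2 => b | 2, 0 => b
  | 0, 3 => c | 3, 0 => c
  | 1, 2 => d | 2, 1 => d
  | 1, 3 => e | 3, 1 => e
  | 2, 3 => f | 3, 2 => f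
  | _, _ => false

private lemma key : ∀ a b c d e f : Bool, ∃ σ : Equiv.Perm (Fin 4), σ ≠ 1 ∧
    ∀ u v : Fin 4, u ≠ v → g a b c d e f (σ u) (σ v) = g a b c d e f u v := by
  decide

private lemma colg (col : Sym2 (Fin 4) → Bool) (u v : Fin 4) (huv : u ≠ v) :
    col s(u, v) = g (col s(0,1)) (col s(0,2)) (col s(0,3)) (col s(1,2)) (col s(1,3)) (col s(2,3)) u v := by
  fin_cases u <;> fin_cases v <;> simp only [g] <;>
    first | exact absurd rfl huv | rfl | exact congrArg col Sym2.eq_swap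

/-- A graph automorphism `φ` of `G` is color-preserving with respect to the
edge 2-coloring `col` (say `true` = grey, `false` = black) if every edge and
its image have the same color. -/
def IsColorPreserving {V : Type*} (G : SimpleGraph V) (col : Sym2 V → Bool)
    (φ : G ≃g G) : Prop :=
  ∀ u v : V, G.Adj u v → col s(φ u, φ v) = col s(u, v)

/-- For every edge 2-coloring of the complete graph `K₄`, there exists a
nontrivial color-preserving automorphism. -/
theorem stmt_0 (col : Sym2 (Fin 4) → Bool) :
    ∃ φ : SimpleGraph.completeGraph (Fin 4) ≃g SimpleGraph.completeGraph (Fin 4),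
      (∃ x, φ x ≠ x) ∧ IsColorPreserving (SimpleGraph.completeGraph (Fin 4)) col φ := by
  obtain ⟨σ, hσ1, hσ2⟩ :=
    key (col s(0,1)) (col s(0,2)) (col s(0,3)) (col s(1,2)) (col s(1,3)) (col s(2,3))
  refine ⟨⟨σ, ?_⟩, ?_, ?_⟩
  · intro u v
    simp [SimpleGraph.completeGraph, σ.injective.ne_iff]
  · by_contra h
    push_neg at h
    exact hσ1 (Equiv.ext fun x => h x)
  · intro u v huv
    have huv' : u ≠ v := huv
    have hs : σ u ≠ σ v := σ.injective.ne huv'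
    show col s(σ u, σ v) = col s(u, v)
    rw [colg col (σ u) (σ v) hs, colg col u v huv']
    exact hσ2 u v huv'
end

section
/- For every edge 2-coloring of the complete bipartite graph K_{2,4}, there exists a nontrivial color-preserving automorphism. -/
def sumIso (ea : Fin 2 ≃ Fin 2) (eb : Fin 4 ≃ Fin 4) :
    completeBipartiteGraph (Fin 2) (Fin 4) ≃g completeBipartiteGraph (Fin 2) (Fin 4) where
  toEquiv := Equiv.sumCongr ea eb
  map_rel_iff' := by
    rintro (a|a) (b|b) <;> simp [completeBipartiteGraph]

/-- For every edge 2-coloring of the complete bipartite graph `K_{2,4}`, there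
exists a nontrivial color-preserving automorphism. -/
theorem stmt_1 (col : Sym2 (Fin 2 ⊕ Fin 4) → Bool) :
    ∃ φ : completeBipartiteGraph (Fin 2) (Fin 4) ≃g completeBipartiteGraph (Fin 2) (Fin 4),
      (∃ x, φ x ≠ x) ∧ IsColorPreserving (completeBipartiteGraph (Fin 2) (Fin 4)) col φ := by
  set p : Fin 4 → Bool × Bool :=
    fun j => (col s(Sum.inl 0, Sum.inr j), col s(Sum.inl 1, Sum.inr j)) with hpdef
  by_cases hinj : Function.Injective p
  · have hbij : Function.Bijective p := (Fintype.bijective_iff_injective_and_card p).mpr ⟨hinj, by decide⟩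
    set e : Fin 4 ≃ Bool × Bool := Equiv.ofBijective p hbij with hedef
    set σ : Fin 4 ≃ Fin 4 := e.trans ((Equiv.prodComm Bool Bool).trans e.symm) with hσdef
    have hps : ∀ x, p (e.symm x) = x := fun x => e.apply_symm_apply x
    have hp : ∀ j, p (σ j) = ((p j).2, (p j).1) := by
      intro j
      have : σ j = e.symm ((p j).2, (p j).1) := rfl
      rw [this, hps]
    refine ⟨sumIso (Equiv.swap 0 1) σ, ⟨Sum.inl 0, by simp [sumIso]⟩, ?_⟩
    have key : ∀ (i : Fin 2) (j : Fin 4),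
        col s(Sum.inl (Equiv.swap (0:Fin 2) 1 i), Sum.inr (σ j)) = col s(Sum.inl i, Sum.inr j) := by
      intro i j
      have h1 := congrArg Prod.fst (hp j)
      have h2 := congrArg Prod.snd (hp j)
      simp only [hpdef] at h1 h2
      fin_cases i
      · simpa using h2
      · simpa using h1
    intro u v hadj
    rcases u with i | j <;> rcases v with i' | j'
    · simp [completeBipartiteGraph] at hadj
    · exact key i j'
    · rw [Sym2.eq_swap (a := (sumIso (Equiv.swap 0 1) σ) (Sum.inr j)), Sym2.eq_swap (a := Sum.inr j)]
      exact key i' j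
    · simp [completeBipartiteGraph] at hadj
  · obtain ⟨j, k, hjk, hne⟩ := Function.not_injective_iff.mp hinj
    refine ⟨sumIso (Equiv.refl _) (Equiv.swap j k), ⟨Sum.inr j, by simp [sumIso, hne.symm]⟩, ?_⟩
    have h1 := congrArg Prod.fst hjk
    have h2 := congrArg Prod.snd hjk
    simp only [hpdef] at h1 h2
    have key : ∀ (i : Fin 2) (m : Fin 4),
        col s(Sum.inl i, Sum.inr (Equiv.swap j k m)) = col s(Sum.inl i, Sum.inr m) := by
      intro i m
      rcases eq_or_ne m j with rfl | hmj
      · rw [Equiv.swap_apply_left]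
        fin_cases i
        · exact h1.symm
        · exact h2.symm
      rcases eq_or_ne m k with rfl | hmk
      · rw [Equiv.swap_apply_right]
        fin_cases i
        · exact h1
        · exact h2
      · rw [Equiv.swap_apply_of_ne_of_ne hmj hmk]
    intro u v hadj
    rcases u with i | m <;> rcases v with i' | m'
    · simp [completeBipartiteGraph] at hadj
    · exact key i m'
    · rw [Sym2.eq_swap (a := (sumIso (Equiv.refl _) (Equiv.swap j k)) (Sum.inr m)),
        Sym2.eq_swap (a := Sum.inr m)]
      exact key i' m
    · simp [completeBipartiteGraph] at hadj
end

section
/- Let n be 3, 4, or 5. For every edge 2-coloring of the cycle graph C_n, there exists a nontrivial color-preserving automorphism. -/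
/-- For `n ≥ 3`, the cycle graph `Cₙ` on the vertex set `ZMod n`: `i` and `j`
are adjacent if and only if `j = i + 1` or `i = j + 1`. -/
def cycleGraph (n : ℕ) (hn : 3 ≤ n) : SimpleGraph (ZMod n) where
  Adj i j := j = i + 1 ∨ i = j + 1
  symm := ⟨fun i j h => h.symm⟩
  loopless := by
    constructor
    intro i h
    haveI : Fact (1 < n) := ⟨by omega⟩
    have h1 : (0 : ZMod n) = 1 := by
      rcases h with h | h <;>
        · nth_rewrite 1 [show i = i + 0 by ring] at h
          exact add_left_cancel h
    exact zero_ne_one h1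

/-- The reflection `x ↦ k - x` as an automorphism of the cycle graph. -/
def reflIso (n : ℕ) (hn : 3 ≤ n) (k : ZMod n) : cycleGraph n hn ≃g cycleGraph n hn where
  toEquiv := Equiv.subLeft k
  map_rel_iff' := by
    intro x y
    show (k - y = k - x + 1 ∨ k - x = k - y + 1) ↔ (y = x + 1 ∨ x = y + 1)
    constructor
    · rintro (h | h)
      · right; linear_combination h
      · left; linear_combination h
    · rintro (h | h)
      · right; linear_combination h
      · left; linear_combination h

lemma main_aux (n : ℕ) (hn : 3 ≤ n) (h2 : (2 : ZMod n) ≠ 0)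
    (col : Sym2 (ZMod n) → Bool) (k : ZMod n)
    (hk : ∀ u : ZMod n, col s(k - 1 - u, k - 1 - u + 1) = col s(u, u + 1)) :
    ∃ φ : cycleGraph n hn ≃g cycleGraph n hn,
      (∃ x, φ x ≠ x) ∧ IsColorPreserving (cycleGraph n hn) col φ := by
  refine ⟨reflIso n hn k, ?_, ?_⟩
  · by_contra h
    push_neg at h
    have h0 : k - 0 = 0 := h 0
    have h1 : k - 1 = 1 := h 1
    apply h2
    linear_combination h0 - h1
  · intro u v hadj
    rcases hadj with h | h
    · subst h
      have e1 : s(k - u, k - (u + 1)) = s(k - 1 - u, k - 1 - u + 1) := by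
        rw [Sym2.eq_swap]
        congr 1 <;> ring
      show col s(k - u, k - (u + 1)) = col s(u, u + 1)
      rw [e1]
      exact hk u
    · subst h
      have e1 : s(k - (v + 1), k - v) = s(k - 1 - v, k - 1 - v + 1) := by
        congr 1 <;> ring
      have e2 : s(v + 1, v) = s(v, v + 1) := Sym2.eq_swap
      show col s(k - (v + 1), k - v) = col s(v + 1, v)
      rw [e1, e2]
      exact hk v

lemma key3 (c : ZMod 3 → Bool) : ∃ k : ZMod 3, ∀ u, c (k - 1 - u) = c u := by
  revert c; decide

lemma key4 (c : ZMod 4 → Bool) : ∃ k : ZMod 4, ∀ u, c (k - 1 - u) = c u := by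
  revert c; decide

lemma key5 (c : ZMod 5 → Bool) : ∃ k : ZMod 5, ∀ u, c (k - 1 - u) = c u := by
  revert c; decide

/-- Let `n` be 3, 4 or 5.  For every edge 2-coloring of the cycle graph `Cₙ`
there exists a nontrivial color-preserving automorphism. -/
theorem stmt_2 (n : ℕ) (hn : n = 3 ∨ n = 4 ∨ n = 5) (col : Sym2 (ZMod n) → Bool) :
    ∃ φ : cycleGraph n (by omega) ≃g cycleGraph n (by omega),
      (∃ x, φ x ≠ x) ∧ IsColorPreserving (cycleGraph n (by omega)) col φ := by
  rcases hn with rfl | rfl | rfl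
  · obtain ⟨k, hk⟩ := key3 (fun u => col s(u, u + 1))
    exact main_aux 3 (by omega) (by decide) col k hk
  · obtain ⟨k, hk⟩ := key4 (fun u => col s(u, u + 1))
    exact main_aux 4 (by omega) (by decide) col k hk
  · obtain ⟨k, hk⟩ := key5 (fun u => col s(u, u + 1))
    exact main_aux 5 (by omega) (by decide) col k hk
end

section
/- Let n ≥ 6 and consider the cycle graph C_n on vertex set ZMod n. Color the three edges {0,1}, {2,3}, and {3,4} grey and all other edges black. Then the only color-preserving automorphism of this 2-colored graph is the identity. -/
lemma key_s5 {n : ℕ} (hn : 6 ≤ n) {c d : ℕ} (hcd : c ≠ d) (h1 : c < d + 6) (h2 : d < c + 6)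
    (h : (c : ZMod n) = d) : False := by
  haveI : NeZero n := ⟨by omega⟩
  rcases Nat.lt_or_ge c d with hlt | hge
  · have h0 : ((d - c : ℕ) : ZMod n) = 0 := by
      rw [Nat.cast_sub hlt.le, h, sub_self]
    rw [ZMod.natCast_eq_zero_iff] at h0
    have := Nat.le_of_dvd (by omega) h0; omega
  · have h0 : ((c - d : ℕ) : ZMod n) = 0 := by
      rw [Nat.cast_sub hge, h, sub_self]
    rw [ZMod.natCast_eq_zero_iff] at h0
    have := Nat.le_of_dvd (by omega) h0; omega

lemma determined {n : ℕ} (hn : 6 ≤ n)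
    (φ : cycleGraph n (by linarith) ≃g cycleGraph n (by linarith))
    (ε : ZMod n) (hε : ε = 1 ∨ ε = -1) (h1 : φ 1 = φ 0 + ε) :
    ∀ x : ZMod n, φ x = φ 0 + ε * x := by
  haveI : NeZero n := ⟨by omega⟩
  have adjφ : ∀ u v : ZMod n, (v = u + 1 ∨ u = v + 1) → (φ v = φ u + 1 ∨ φ u = φ v + 1) := by
    intro u v h
    exact φ.map_adj_iff.mpr h
  have main : ∀ k : ℕ, φ ((k : ZMod n)) = φ 0 + ε * (k : ℕ) ∧
      φ ((k + 1 : ℕ) : ZMod n) = φ 0 + ε * ((k + 1 : ℕ) : ZMod n) := by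
    intro k
    induction k with
    | zero => refine ⟨by simp, ?_⟩; push_cast; simpa using h1
    | succ k ih =>
      refine ⟨ih.2, ?_⟩
      have hadj := adjφ ((k + 1 : ℕ) : ZMod n) ((k + 2 : ℕ) : ZMod n) (Or.inl (by push_cast; ring))
      have h2 : φ ((k + 2 : ℕ) : ZMod n) = φ 0 + ε * ((k + 2 : ℕ) : ZMod n) ∨
          φ ((k + 2 : ℕ) : ZMod n) = φ ((k : ℕ) : ZMod n) := by
        have i1 := ih.1
        have i2 := ih.2
        rcases hε with rfl | rfl <;> rcases hadj with h | h <;>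
            push_cast at h i1 i2 ⊢
        · left; linear_combination h + i2
        · right; linear_combination i2 - h - i1
        · right; linear_combination h + i2 - i1
        · left; linear_combination i2 - h
      rcases h2 with h2 | h2
      · have : ((k + 1 + 1 : ℕ) : ZMod n) = ((k + 2 : ℕ) : ZMod n) := by push_cast; ring
        rw [this, h2]
      · exfalso
        have hk := (EquivLike.injective φ) h2
        exact key_s5 hn (by omega) (by omega) (by omega) hk
  intro x
  have := (main x.val).1
  rwa [ZMod.natCast_rightInverse x] at this

lemma kk {n : ℕ} (hn : 6 ≤ n) (c d : ℕ) (h : (c : ZMod n) = d)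
    (h1 : c ≠ d := by omega) (h2 : c < d + 6 := by omega) (h3 : d < c + 6 := by omega) :
    False :=
  key_s5 hn h1 h2 h3 h

/-- Let `n ≥ 6` and color the edges `{0,1}`, `{2,3}` and `{3,4}` of the cycle
graph `Cₙ` grey and all other edges black.  Then the only color-preserving
automorphism of this 2-colored graph is the identity. -/
theorem stmt_5 (n : ℕ) (hn : 6 ≤ n)
    (φ : cycleGraph n (by omega) ≃g cycleGraph n (by omega))
    (hφ : IsColorPreserving (cycleGraph n (by omega))
      (fun e => decide
        (e = s((0 : ZMod n), 1) ∨ e = s((2 : ZMod n), 3) ∨ e = s((3 : ZMod n), 4))) φ) :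
    ∀ x, φ x = x := by
  haveI : NeZero n := ⟨by omega⟩
  have hadj01 : (cycleGraph n (by omega)).Adj 0 1 := Or.inl (zero_add 1).symm
  have hadj23 : (cycleGraph n (by omega)).Adj 2 3 := Or.inl (by norm_num)
  have hadj34 : (cycleGraph n (by omega)).Adj 3 4 := Or.inl (by norm_num)
  have h01 : φ 1 = φ 0 + 1 ∨ φ 0 = φ 1 + 1 := φ.map_adj_iff.mpr hadj01
  have g1 := hφ 0 1 hadj01
  have g2 := hφ 2 3 hadj23
  have g3 := hφ 3 4 hadj34
  simp only [decide_eq_decide, Sym2.eq_iff, eq_self_iff_true, true_and, and_true,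
    true_or, or_true, iff_true] at g1 g2 g3
  rcases h01 with hrot | href
  · -- rotation : φ x = φ 0 + x
    have hx := determined hn φ 1 (Or.inl rfl) hrot
    rw [hx 1] at g1
    rw [hx 2, hx 3] at g2
    obtain (⟨h1, h2⟩|⟨h1, h2⟩)|(⟨h1, h2⟩|⟨h1, h2⟩)|⟨h1, h2⟩|⟨h1, h2⟩ := g1
    · intro x; rw [hx x]; linear_combination h1
    · exact (kk hn 2 0 (by push_cast; linear_combination h2 - h1)).elim
    · -- φ 0 = 2
      obtain (⟨p1, p2⟩|⟨p1, p2⟩)|(⟨p1, p2⟩|⟨p1, p2⟩)|⟨p1, p2⟩|⟨p1, p2⟩ := g2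
      · exact (kk hn 4 0 (by push_cast; linear_combination p1 - h1)).elim
      · exact (kk hn 4 1 (by push_cast; linear_combination p1 - h1)).elim
      · exact (kk hn 4 2 (by push_cast; linear_combination p1 - h1)).elim
      · exact (kk hn 4 3 (by push_cast; linear_combination p1 - h1)).elim
      · exact (kk hn 4 3 (by push_cast; linear_combination p1 - h1)).elim
      · exact (kk hn 5 3 (by push_cast; linear_combination p2 - h1)).elim
    · exact (kk hn 2 0 (by push_cast; linear_combination h2 - h1)).elim
    · -- φ 0 = 3
      obtain (⟨p1, p2⟩|⟨p1, p2⟩)|(⟨p1, p2⟩|⟨p1, p2⟩)|⟨p1, p2⟩|⟨p1, p2⟩ := g2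
      · exact (kk hn 5 0 (by push_cast; linear_combination p1 - h1)).elim
      · exact (kk hn 5 1 (by push_cast; linear_combination p1 - h1)).elim
      · exact (kk hn 5 2 (by push_cast; linear_combination p1 - h1)).elim
      · exact (kk hn 5 3 (by push_cast; linear_combination p1 - h1)).elim
      · exact (kk hn 5 3 (by push_cast; linear_combination p1 - h1)).elim
      · exact (kk hn 5 4 (by push_cast; linear_combination p1 - h1)).elim
    · exact (kk hn 2 0 (by push_cast; linear_combination h2 - h1)).elim
  · -- reflection : φ x = φ 0 - x
    have hx := determined hn φ (-1) (Or.inr rfl) (by rw [href]; ring)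
    rw [hx 1] at g1
    rw [hx 2, hx 3] at g2
    rw [hx 3, hx 4] at g3
    obtain (⟨h1, h2⟩|⟨h1, h2⟩)|(⟨h1, h2⟩|⟨h1, h2⟩)|⟨h1, h2⟩|⟨h1, h2⟩ := g1
    · exact (kk hn 2 0 (by push_cast; linear_combination h1 - h2)).elim
    · -- φ 0 = 1
      obtain (⟨p1, p2⟩|⟨p1, p2⟩)|(⟨p1, p2⟩|⟨p1, p2⟩)|⟨p1, p2⟩|⟨p1, p2⟩ := g2
      · exact (kk hn 1 0 (by push_cast; linear_combination h1 - p1)).elim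
      · exact (kk hn 2 0 (by push_cast; linear_combination h1 - p1)).elim
      · exact (kk hn 3 0 (by push_cast; linear_combination h1 - p1)).elim
      · exact (kk hn 4 0 (by push_cast; linear_combination h1 - p1)).elim
      · exact (kk hn 4 0 (by push_cast; linear_combination h1 - p1)).elim
      · exact (kk hn 5 0 (by push_cast; linear_combination h1 - p1)).elim
    · exact (kk hn 2 0 (by push_cast; linear_combination h1 - h2)).elim
    · -- φ 0 = 3
      obtain (⟨p1, p2⟩|⟨p1, p2⟩)|(⟨p1, p2⟩|⟨p1, p2⟩)|⟨p1, p2⟩|⟨p1, p2⟩ := g2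
      · exact (kk hn 0 1 (by push_cast; linear_combination h1 - p1)).elim
      · -- consistent with g2; use g3
        obtain (⟨q1, q2⟩|⟨q1, q2⟩)|(⟨q1, q2⟩|⟨q1, q2⟩)|⟨q1, q2⟩|⟨q1, q2⟩ := g3
        · exact (kk hn 2 0 (by push_cast; linear_combination h1 - q2)).elim
        · exact (kk hn 1 0 (by push_cast; linear_combination h1 - q1)).elim
        · exact (kk hn 2 0 (by push_cast; linear_combination h1 - q1)).elim
        · exact (kk hn 3 0 (by push_cast; linear_combination h1 - q1)).elim
        · exact (kk hn 3 0 (by push_cast; linear_combination h1 - q1)).elim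
        · exact (kk hn 4 0 (by push_cast; linear_combination h1 - q1)).elim
      · exact (kk hn 2 1 (by push_cast; linear_combination h1 - p1)).elim
      · exact (kk hn 3 1 (by push_cast; linear_combination h1 - p1)).elim
      · exact (kk hn 3 1 (by push_cast; linear_combination h1 - p1)).elim
      · exact (kk hn 4 1 (by push_cast; linear_combination h1 - p1)).elim
    · exact (kk hn 2 0 (by push_cast; linear_combination h1 - h2)).elim
    · -- φ 0 = 4
      obtain (⟨p1, p2⟩|⟨p1, p2⟩)|(⟨p1, p2⟩|⟨p1, p2⟩)|⟨p1, p2⟩|⟨p1, p2⟩ := g2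
      · exact (kk hn 0 2 (by push_cast; linear_combination h1 - p1)).elim
      · exact (kk hn 1 2 (by push_cast; linear_combination h1 - p1)).elim
      · exact (kk hn 3 1 (by push_cast; linear_combination h1 - p2)).elim
      · exact (kk hn 3 2 (by push_cast; linear_combination h1 - p1)).elim
      · exact (kk hn 3 2 (by push_cast; linear_combination h1 - p1)).elim
      · exact (kk hn 4 2 (by push_cast; linear_combination h1 - p1)).elim
end

section
/- Let G be an acyclic simple graph (a forest) with vertices v, a, b, e, c, d such that a, b, e are pairwise distinct, c ≠ v, d ≠ v, and G contains the edges va, vb, ve, ac, and bd. Color the four edges ca, av, ve, and bd grey and all other edges of G black. Then every color-preserving automorphism of this 2-colored graph fixes each of the vertices v, a, b, e, c, and d. -/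
private lemma no_tri {V : Type*} {G : SimpleGraph V} (h : G.IsAcyclic) {x y z : V}
    (hxy : G.Adj x y) (hyz : G.Adj y z) (hxz : G.Adj x z) : False := by
  have key := SimpleGraph.isAcyclic_iff_path_unique.mp h
    (SimpleGraph.Path.singleton hxz)
    ⟨SimpleGraph.Walk.cons hxy (SimpleGraph.Walk.cons hyz SimpleGraph.Walk.nil), by
      simp [SimpleGraph.Walk.isPath_def, hxy.ne, hyz.ne, hxz.ne]⟩
  have hl := congrArg (fun p : G.Path x z => p.1.length) key
  simp [SimpleGraph.Path.singleton] at hl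

private lemma no_sq {V : Type*} {G : SimpleGraph V} (h : G.IsAcyclic) {x y z w : V}
    (hxy : G.Adj x y) (hyz : G.Adj y z) (hzw : G.Adj z w) (hwx : G.Adj w x)
    (hxz : x ≠ z) (hyw : y ≠ w) : False := by
  have key := SimpleGraph.isAcyclic_iff_path_unique.mp h
    (⟨SimpleGraph.Walk.cons hxy (SimpleGraph.Walk.cons hyz SimpleGraph.Walk.nil), by
      simp [SimpleGraph.Walk.isPath_def, hxy.ne, hyz.ne, hxz]⟩ : G.Path x z)
    ⟨SimpleGraph.Walk.cons hwx.symm (SimpleGraph.Walk.cons hzw.symm SimpleGraph.Walk.nil), by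
      simp [SimpleGraph.Walk.isPath_def, hwx.ne', hzw.ne', hxz]⟩
  have hs := congrArg (fun p : G.Path x z => p.1.support) key
  simp at hs
  exact hyw hs

/-- Let `G` be an acyclic simple graph (a forest) with vertices `v, a, b, e,
c, d` such that `a`, `b`, `e` are pairwise distinct, `c ≠ v`, `d ≠ v`, and
`G` contains the edges `va`, `vb`, `ve`, `ac`, `bd`.  Color the four edges
`ca`, `av`, `ve`, `bd` grey and all other edges black.  Then every
color-preserving automorphism fixes each of `v`, `a`, `b`, `e`, `c`, `d`. -/
theorem stmt_9 {V : Type*} [DecidableEq V] (G : SimpleGraph V)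
    (hacyc : G.IsAcyclic) (v a b e c d : V)
    (hab : a ≠ b) (hae : a ≠ e) (hbe : b ≠ e) (hcv : c ≠ v) (hdv : d ≠ v)
    (hva : G.Adj v a) (hvb : G.Adj v b) (hve : G.Adj v e)
    (hac : G.Adj a c) (hbd : G.Adj b d)
    (φ : G ≃g G)
    (hφ : IsColorPreserving G
      (fun ed => decide (ed = s(c, a) ∨ ed = s(a, v) ∨ ed = s(v, e) ∨ ed = s(b, d))) φ) :
    φ v = v ∧ φ a = a ∧ φ b = b ∧ φ e = e ∧ φ c = c ∧ φ d = d := by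
  have inj : ∀ {x y : V}, φ x = φ y → x = y := fun h => φ.injective h
  -- all six vertices are pairwise distinct
  have hav : v ≠ a := hva.ne
  have hbv : v ≠ b := hvb.ne
  have hev : v ≠ e := hve.ne
  have hca : c ≠ a := hac.ne'
  have hdb : d ≠ b := hbd.ne'
  have hce : c ≠ e := fun h => no_tri hacyc hva.symm hve (h ▸ hac)
  have hcb : c ≠ b := fun h => no_tri hacyc hva.symm hvb (h ▸ hac)
  have hda : d ≠ a := fun h => no_tri hacyc hvb.symm hva (h ▸ hbd)
  have hde : d ≠ e := fun h => no_tri hacyc hvb.symm hve (h ▸ hbd)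
  have hcd : c ≠ d := fun h => no_sq hacyc hac (h ▸ hbd).symm hvb.symm hva hab hcv
  -- unfold the color-preservation condition
  have key : ∀ u w, G.Adj u w →
      ((s(φ u, φ w) = s(c,a) ∨ s(φ u, φ w) = s(a,v) ∨ s(φ u, φ w) = s(v,e) ∨ s(φ u, φ w) = s(b,d)) ↔
       (s(u,w) = s(c,a) ∨ s(u,w) = s(a,v) ∨ s(u,w) = s(v,e) ∨ s(u,w) = s(b,d))) := by
    intro u w h
    have := hφ u w h
    rwa [decide_eq_decide] at this
  have g1 := (key c a hac.symm).mpr (Or.inl rfl)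
  have g2 := (key a v hva.symm).mpr (Or.inr (Or.inl rfl))
  have g3 := (key v e hve).mpr (Or.inr (Or.inr (Or.inl rfl)))
  have g4 := (key b d hbd).mpr (Or.inr (Or.inr (Or.inr rfl)))
  have hAvb : G.Adj (φ v) (φ b) := φ.map_adj_iff.mpr hvb
  rcases g2 with h2|h2|h2|h2 <;> rw [Sym2.eq_iff] at h2 <;>
    rcases h2 with ⟨ha', hv'⟩|⟨ha', hv'⟩
  · -- φ a = c, φ v = a
    rw [ha'] at g1
    simp [Sym2.eq_iff, hab, hae, hbe, hcv, hdv, hav, hbv, hev, hca, hdb, hce, hcb, hda, hde, hcd,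
      hab.symm, hae.symm, hbe.symm, hcv.symm, hdv.symm, hav.symm, hbv.symm, hev.symm, hca.symm,
      hdb.symm, hce.symm, hcb.symm, hda.symm, hde.symm, hcd.symm] at g1
    exact absurd (inj (g1.trans hv'.symm)) hcv
  · -- φ a = a, φ v = c
    rw [hv'] at g3
    simp [Sym2.eq_iff, hab, hae, hbe, hcv, hdv, hav, hbv, hev, hca, hdb, hce, hcb, hda, hde, hcd,
      hab.symm, hae.symm, hbe.symm, hcv.symm, hdv.symm, hav.symm, hbv.symm, hev.symm, hca.symm,
      hdb.symm, hce.symm, hcb.symm, hda.symm, hde.symm, hcd.symm] at g3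
    exact absurd (inj (g3.trans ha'.symm)) (Ne.symm hae)
  · -- φ a = a, φ v = v  (main branch)
    rw [ha'] at g1
    rw [hv'] at g3
    simp [Sym2.eq_iff, hab, hae, hbe, hcv, hdv, hav, hbv, hev, hca, hdb, hce, hcb, hda, hde, hcd,
      hab.symm, hae.symm, hbe.symm, hcv.symm, hdv.symm, hav.symm, hbv.symm, hev.symm, hca.symm,
      hdb.symm, hce.symm, hcb.symm, hda.symm, hde.symm, hcd.symm] at g1 g3
    rcases g1 with hc'|hc'
    swap
    · exact absurd (inj (hc'.trans hv'.symm)) hcv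
    rcases g3 with he'|he'
    · exact absurd (inj (he'.trans ha'.symm)) (Ne.symm hae)
    simp only [Sym2.eq_iff] at g4
    rcases g4 with (⟨hb',hd'⟩|⟨hb',hd'⟩)|(⟨hb',hd'⟩|⟨hb',hd'⟩)|(⟨hb',hd'⟩|⟨hb',hd'⟩)|(⟨hb',hd'⟩|⟨hb',hd'⟩)
    · exact absurd (inj (hb'.trans hc'.symm)) (Ne.symm hcb)
    · exact absurd (inj (hb'.trans ha'.symm)) (Ne.symm hab)
    · exact absurd (inj (hb'.trans ha'.symm)) (Ne.symm hab)
    · exact absurd (inj (hb'.trans hv'.symm)) (Ne.symm hbv)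
    · exact absurd (inj (hb'.trans hv'.symm)) (Ne.symm hbv)
    · exact absurd (inj (hb'.trans he'.symm)) hbe
    · exact ⟨hv', ha', hb', he', hc', hd'⟩
    · rw [hv', hb'] at hAvb
      exact absurd (no_tri hacyc hvb hbd hAvb) not_false
  · -- φ a = v, φ v = a  (swap branch)
    rw [ha'] at g1
    rw [hv'] at g3
    simp [Sym2.eq_iff, hab, hae, hbe, hcv, hdv, hav, hbv, hev, hca, hdb, hce, hcb, hda, hde, hcd,
      hab.symm, hae.symm, hbe.symm, hcv.symm, hdv.symm, hav.symm, hbv.symm, hev.symm, hca.symm,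
      hdb.symm, hce.symm, hcb.symm, hda.symm, hde.symm, hcd.symm] at g1 g3
    rcases g1 with hc'|hc'
    · exact absurd (inj (hc'.trans hv'.symm)) hcv
    rcases g3 with he'|he'
    swap
    · exact absurd (inj (he'.trans ha'.symm)) (Ne.symm hae)
    simp only [Sym2.eq_iff] at g4
    rcases g4 with (⟨hb',hd'⟩|⟨hb',hd'⟩)|(⟨hb',hd'⟩|⟨hb',hd'⟩)|(⟨hb',hd'⟩|⟨hb',hd'⟩)|(⟨hb',hd'⟩|⟨hb',hd'⟩)
    · exact absurd (inj (hb'.trans he'.symm)) hbe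
    · exact absurd (inj (hb'.trans hv'.symm)) (Ne.symm hbv)
    · exact absurd (inj (hb'.trans hv'.symm)) (Ne.symm hbv)
    · exact absurd (inj (hb'.trans ha'.symm)) (Ne.symm hab)
    · exact absurd (inj (hb'.trans ha'.symm)) (Ne.symm hab)
    · exact absurd (inj (hb'.trans hc'.symm)) (Ne.symm hcb)
    · rw [hv', hb'] at hAvb
      exact absurd (no_tri hacyc hva.symm hvb hAvb) not_false
    · rw [hv', hb'] at hAvb
      exact absurd (no_sq hacyc hAvb hbd.symm hvb.symm hva hab hdv) not_false
  · -- φ a = v, φ v = e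
    rw [hv'] at g3
    simp [Sym2.eq_iff, hab, hae, hbe, hcv, hdv, hav, hbv, hev, hca, hdb, hce, hcb, hda, hde, hcd,
      hab.symm, hae.symm, hbe.symm, hcv.symm, hdv.symm, hav.symm, hbv.symm, hev.symm, hca.symm,
      hdb.symm, hce.symm, hcb.symm, hda.symm, hde.symm, hcd.symm] at g3
    exact absurd (inj (g3.trans ha'.symm)) (Ne.symm hae)
  · -- φ a = e, φ v = v
    rw [ha'] at g1
    simp [Sym2.eq_iff, hab, hae, hbe, hcv, hdv, hav, hbv, hev, hca, hdb, hce, hcb, hda, hde, hcd,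
      hab.symm, hae.symm, hbe.symm, hcv.symm, hdv.symm, hav.symm, hbv.symm, hev.symm, hca.symm,
      hdb.symm, hce.symm, hcb.symm, hda.symm, hde.symm, hcd.symm] at g1
    exact absurd (inj (g1.trans hv'.symm)) hcv
  · -- φ a = b, φ v = d
    rw [hv'] at g3
    simp [Sym2.eq_iff, hab, hae, hbe, hcv, hdv, hav, hbv, hev, hca, hdb, hce, hcb, hda, hde, hcd,
      hab.symm, hae.symm, hbe.symm, hcv.symm, hdv.symm, hav.symm, hbv.symm, hev.symm, hca.symm,
      hdb.symm, hce.symm, hcb.symm, hda.symm, hde.symm, hcd.symm] at g3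
    exact absurd (inj (g3.trans ha'.symm)) (Ne.symm hae)
  · -- φ a = d, φ v = b
    rw [ha'] at g1
    simp [Sym2.eq_iff, hab, hae, hbe, hcv, hdv, hav, hbv, hev, hca, hdb, hce, hcb, hda, hde, hcd,
      hab.symm, hae.symm, hbe.symm, hcv.symm, hdv.symm, hav.symm, hbv.symm, hev.symm, hca.symm,
      hdb.symm, hce.symm, hcb.symm, hda.symm, hde.symm, hcd.symm] at g1
    exact absurd (inj (g1.trans hv'.symm)) hcv
end

section
/- Let G be a finite connected acyclic simple graph (a tree). Suppose that every vertex of degree at least 3 has at most one neighbor of degree at least 2. Then G has at most two vertices of degree at least 3; that is, there do not exist three pairwise distinct vertices of G each of degree at least 3. -/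
open SimpleGraph

section Aux

variable {V : Type*} [Fintype V] [DecidableEq V] {G : SimpleGraph V} [DecidableRel G.Adj]

private lemma deg_two_of_two {v w₁ w₂ : V} (h1 : G.Adj v w₁) (h2 : G.Adj v w₂)
    (hne : w₁ ≠ w₂) : 2 ≤ G.degree v := by
  have hsub : ({w₁, w₂} : Finset V) ⊆ G.neighborFinset v := by
    intro a ha
    rcases Finset.mem_insert.1 ha with rfl | ha
    · simpa [SimpleGraph.mem_neighborFinset] using h1
    · rw [Finset.mem_singleton] at ha; subst ha
      simpa [SimpleGraph.mem_neighborFinset] using h2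
  have hcard : ({w₁, w₂} : Finset V).card = 2 := by
    rw [Finset.card_insert_of_notMem (by simpa using hne), Finset.card_singleton]
  calc 2 = ({w₁, w₂} : Finset V).card := hcard.symm
    _ ≤ (G.neighborFinset v).card := Finset.card_le_card hsub
    _ = G.degree v := (G.card_neighborFinset_eq_degree v)

private lemma deg_three_of_three {v w₁ w₂ w₃ : V} (h1 : G.Adj v w₁) (h2 : G.Adj v w₂)
    (h3 : G.Adj v w₃) (h12 : w₁ ≠ w₂) (h13 : w₁ ≠ w₃) (h23 : w₂ ≠ w₃) :
    3 ≤ G.degree v := by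
  have hsub : ({w₁, w₂, w₃} : Finset V) ⊆ G.neighborFinset v := by
    intro a ha
    simp only [Finset.mem_insert, Finset.mem_singleton] at ha
    rcases ha with rfl | rfl | rfl <;>
      simpa [SimpleGraph.mem_neighborFinset] using (by assumption : G.Adj v a)
  have hcard : ({w₁, w₂, w₃} : Finset V).card = 3 := by
    rw [Finset.card_insert_of_notMem (by simp [h12, h13]),
      Finset.card_insert_of_notMem (by simpa using h23), Finset.card_singleton]
  calc 3 = ({w₁, w₂, w₃} : Finset V).card := hcard.symm
    _ ≤ (G.neighborFinset v).card := Finset.card_le_card hsub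
    _ = G.degree v := (G.card_neighborFinset_eq_degree v)

/-- An internal vertex of a path has two distinct neighbors on the path. -/
private lemma neighbors_on_path : ∀ {a b : V} (p : G.Walk a b), p.IsPath →
    ∀ v ∈ p.support, v ≠ a → v ≠ b →
    ∃ w₁ w₂, w₁ ≠ w₂ ∧ G.Adj v w₁ ∧ G.Adj v w₂ ∧ w₁ ∈ p.support ∧ w₂ ∈ p.support := by
  intro a b p
  induction p with
  | nil =>
    intro _ v hv hva _
    simp only [SimpleGraph.Walk.support_nil, List.mem_singleton] at hv
    exact absurd hv hva
  | @cons u c b h q ih =>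
    intro hp v hv hva hvb
    rw [SimpleGraph.Walk.support_cons, List.mem_cons] at hv
    rcases hv with rfl | hv
    · exact absurd rfl hva
    rw [SimpleGraph.Walk.cons_isPath_iff] at hp
    by_cases hvc : v = c
    · subst hvc
      cases q with
      | nil => exact absurd rfl hvb
      | @cons _ d _ h' q' =>
        refine ⟨u, d, ?_, h.symm, h', ?_, ?_⟩
        · rintro rfl
          exact hp.2 (by simp)
        · simp
        · simp
    · obtain ⟨w₁, w₂, hne, hw1, hw2, hm1, hm2⟩ := ih hp.1 v hv hvc hvb
      exact ⟨w₁, w₂, hne, hw1, hw2, by simp [hm1], by simp [hm2]⟩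

private lemma deg_internal {a b v : V} (p : G.Walk a b) (hp : p.IsPath)
    (hv : v ∈ p.support) (hva : v ≠ a) (hvb : v ≠ b) : 2 ≤ G.degree v := by
  obtain ⟨w₁, w₂, hne, h1, h2, _, _⟩ := neighbors_on_path p hp v hv hva hvb
  exact deg_two_of_two h1 h2 hne

/-- Walking from outside a set to inside it, there is a first crossing edge. -/
private lemma exists_crossing (s : V → Prop) : ∀ {x y : V} (q : G.Walk x y),
    ¬ s x → s y → ∃ u m, G.Adj u m ∧ s m ∧ ¬ s u ∧ u ∈ q.support := by
  intro x y q
  induction q with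
  | nil => intro hx hy; exact absurd hy hx
  | @cons u c b h q ih =>
    intro hx hy
    by_cases hc : s c
    · exact ⟨u, c, h, hc, hx, by simp⟩
    · obtain ⟨u', m, hum, hm, hu', hmem⟩ := ih hc hy
      exact ⟨u', m, hum, hm, hu', by simp [hmem]⟩

/-- The first step of a nontrivial walk. -/
private lemma exists_snd {a b : V} (p : G.Walk a b) (hab : a ≠ b) :
    ∃ w, G.Adj a w ∧ w ∈ p.support ∧ w ≠ a := by
  cases p with
  | nil => exact absurd rfl hab
  | @cons _ c _ h q => exact ⟨c, h, by simp, h.ne'⟩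

end Aux

/-- Let `G` be a finite connected acyclic simple graph (a tree).  Suppose that
every vertex of degree at least 3 has at most one neighbor of degree at
least 2.  Then `G` has at most two vertices of degree at least 3. -/
theorem stmt_10 {V : Type*} [Fintype V] [DecidableEq V] (G : SimpleGraph V)
    [DecidableRel G.Adj] (hconn : G.Connected) (hacyc : G.IsAcyclic)
    (hdeg : ∀ v w₁ w₂ : V, 3 ≤ G.degree v → G.Adj v w₁ → G.Adj v w₂ →
      2 ≤ G.degree w₁ → 2 ≤ G.degree w₂ → w₁ = w₂) :
    ¬ ∃ x y z : V, x ≠ y ∧ x ≠ z ∧ y ≠ z ∧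
      3 ≤ G.degree x ∧ 3 ≤ G.degree y ∧ 3 ≤ G.degree z := by
  rintro ⟨x, y, z, hxy, hxz, hyz, hdx, hdy, hdz⟩
  obtain ⟨p₀⟩ := hconn.preconnected y z
  set P : G.Walk y z := (p₀.toPath : G.Walk y z) with hPdef
  have hP : P.IsPath := p₀.toPath.2
  -- every vertex on P has degree at least 2
  have hdegP : ∀ v ∈ P.support, 2 ≤ G.degree v := by
    intro v hv
    by_cases hvy : v = y
    · exact hvy ▸ le_trans (by norm_num) hdy
    by_cases hvz : v = z
    · exact hvz ▸ le_trans (by norm_num) hdz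
    exact deg_internal P hP hv hvy hvz
  by_cases hx : x ∈ P.support
  · -- x is internal on P; its two path-neighbors both have degree ≥ 2
    obtain ⟨w₁, w₂, hne, h1, h2, hm1, hm2⟩ := neighbors_on_path P hP x hx hxy hxz
    exact hne (hdeg x w₁ w₂ hdx h1 h2 (hdegP _ hm1) (hdegP _ hm2))
  · -- first crossing from x's side into P
    obtain ⟨q₀⟩ := hconn.preconnected x y
    set Q : G.Walk x y := (q₀.toPath : G.Walk x y) with hQdef
    have hQ : Q.IsPath := q₀.toPath.2
    obtain ⟨u, m, hum, hm, hu, huQ⟩ :=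
      exists_crossing (· ∈ P.support) Q hx P.start_mem_support
    have hdu : 2 ≤ G.degree u := by
      by_cases hux : u = x
      · exact hux ▸ le_trans (by norm_num) hdx
      · have huy : u ≠ y := fun h => hu (h ▸ P.start_mem_support)
        exact deg_internal Q hQ huQ hux huy
    by_cases hmy : m = y
    · subst hmy
      obtain ⟨w, hw, hwmem, hwm⟩ := exists_snd P hyz
      have huw : u ≠ w := fun h => hu (h ▸ hwmem)
      exact huw (hdeg m u w hdy hum.symm hw hdu (hdegP _ hwmem))
    by_cases hmz : m = z
    · subst hmz
      obtain ⟨w, hw, hwmem, hwm⟩ := exists_snd P.reverse (Ne.symm hyz)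
      have hwmem' : w ∈ P.support := by
        rwa [SimpleGraph.Walk.support_reverse, List.mem_reverse] at hwmem
      have huw : u ≠ w := fun h => hu (h ▸ hwmem')
      exact huw (hdeg m u w hdz hum.symm hw hdu (hdegP _ hwmem'))
    · -- m is internal on P; together with u it has three distinct neighbors
      obtain ⟨w₁, w₂, hne, h1, h2, hm1, hm2⟩ := neighbors_on_path P hP m hm hmy hmz
      have hdm : 3 ≤ G.degree m :=
        deg_three_of_three hum.symm h1 h2
          (fun h => hu (h ▸ hm1)) (fun h => hu (h ▸ hm2)) hne
      exact hne (hdeg m w₁ w₂ hdm h1 h2 (hdegP _ hm1) (hdegP _ hm2))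
end

section
/- Let m ≥ 5 and consider the complete bipartite graph K_{2,m} with parts {a, c} and {u₁, ..., u_m}. Color grey the edges au_i for all i ∉ {1, 3} together with the edges cu₂ and cu₃, and color all other edges black. Then every color-preserving automorphism of this 2-colored graph fixes each of the vertices a, c, u₁, u₂, and u₃. -/
lemma eval_col (m : ℕ) (hm : 4 < m) (x : Fin 2) (j : Fin m) :
    ((∃ i : Fin m, i ≠ ⟨0, by omega⟩ ∧ i ≠ ⟨2, by omega⟩ ∧
        s(Sum.inl x, Sum.inr j) = (s(Sum.inl 0, Sum.inr i) : Sym2 (Fin 2 ⊕ Fin m))) ∨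
      s(Sum.inl x, Sum.inr j) = s(Sum.inl 1, Sum.inr ⟨1, by omega⟩) ∨
      s(Sum.inl x, Sum.inr j) = s(Sum.inl 1, Sum.inr ⟨2, by omega⟩))
    ↔ ((x = 0 ∧ j.1 ≠ 0 ∧ j.1 ≠ 2) ∨ (x = 1 ∧ (j.1 = 1 ∨ j.1 = 2))) := by
  simp only [Sym2.eq_iff, Fin.ext_iff]
  simp
  simp only [Fin.ext_iff, Fin.val_zero, Fin.val_one, Fin.isValue]
  omega

/-- Let `m ≥ 5` and consider `K_{2,m}` with parts `{a, c} = {inl 0, inl 1}`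
and `{u₁, …, u_m} = {inr 0, …, inr (m-1)}` (so `uᵢ = inr (i-1)`).  Color grey
the edges `a uᵢ` for `i ∉ {1, 3}` together with `c u₂` and `c u₃`, and color
all other edges black.  Then every color-preserving automorphism of this
2-colored graph fixes each of `a`, `c`, `u₁`, `u₂`, `u₃`. -/
theorem stmt_12 (m : ℕ) (hm : 5 ≤ m)
    (φ : completeBipartiteGraph (Fin 2) (Fin m) ≃g completeBipartiteGraph (Fin 2) (Fin m))
    (hφ : IsColorPreserving (completeBipartiteGraph (Fin 2) (Fin m))
      (fun e => decide
        ((∃ i : Fin m, i ≠ ⟨0, by omega⟩ ∧ i ≠ ⟨2, by omega⟩ ∧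
            e = s(Sum.inl 0, Sum.inr i)) ∨
          e = s(Sum.inl 1, Sum.inr ⟨1, by omega⟩) ∨
          e = s(Sum.inl 1, Sum.inr ⟨2, by omega⟩))) φ) :
    φ (Sum.inl 0) = Sum.inl 0 ∧ φ (Sum.inl 1) = Sum.inl 1 ∧
      φ (Sum.inr ⟨0, by omega⟩) = Sum.inr ⟨0, by omega⟩ ∧
      φ (Sum.inr ⟨1, by omega⟩) = Sum.inr ⟨1, by omega⟩ ∧
      φ (Sum.inr ⟨2, by omega⟩) = Sum.inr ⟨2, by omega⟩ := by
  have hadj : ∀ (x : Fin 2) (j : Fin m),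
      (completeBipartiteGraph (Fin 2) (Fin m)).Adj (Sum.inl x) (Sum.inr j) := by
    intro x j; simp
  have hinj := φ.injective
  -- Step A: φ maps left vertices to left vertices
  have hleft : ∀ x : Fin 2, ∃ y : Fin 2, φ (Sum.inl x) = Sum.inl y := by
    intro x
    rcases h : φ (Sum.inl x) with y | j
    · exact ⟨y, rfl⟩
    · exfalso
      have key : ∀ k : Fin m, ∃ b : Fin 2, φ (Sum.inr k) = Sum.inl b := by
        intro k
        have h2 := φ.map_adj_iff.mpr (hadj x k)
        rw [h] at h2
        rcases hk : φ (Sum.inr k) with b | j'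
        · exact ⟨b, rfl⟩
        · rw [hk] at h2; simp at h2
      obtain ⟨b0, hb0⟩ := key ⟨0, by omega⟩
      obtain ⟨b1, hb1⟩ := key ⟨1, by omega⟩
      obtain ⟨b2, hb2⟩ := key ⟨2, by omega⟩
      have hcases : b0 = b1 ∨ b0 = b2 ∨ b1 = b2 := by omega
      rcases hcases with hc | hc | hc
      · have := hinj (hb0.trans (hc ▸ hb1.symm)); simp [Fin.ext_iff] at this
      · have := hinj (hb0.trans (hc ▸ hb2.symm)); simp [Fin.ext_iff] at this
      · have := hinj (hb1.trans (hc ▸ hb2.symm)); simp [Fin.ext_iff] at this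
  obtain ⟨y0, hy0⟩ := hleft 0
  obtain ⟨y1, hy1⟩ := hleft 1
  have hy01 : y0 ≠ y1 := by
    intro h; apply absurd (hinj (hy0.trans (h ▸ hy1.symm))); simp [Fin.ext_iff]
  -- Step B: φ maps right vertices to right vertices
  have hright : ∀ j : Fin m, ∃ k : Fin m, φ (Sum.inr j) = Sum.inr k := by
    intro j
    rcases h : φ (Sum.inr j) with b | k
    · exfalso
      have hb : b = y0 ∨ b = y1 := by omega
      rcases hb with hb | hb
      · have := hinj (h.trans (hb ▸ hy0.symm)); simp at this
      · have := hinj (h.trans (hb ▸ hy1.symm)); simp at this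
    · exact ⟨k, rfl⟩
  -- color transfer in propositional form
  have hcol : ∀ (x x' : Fin 2) (j j' : Fin m), φ (Sum.inl x) = Sum.inl x' →
      φ (Sum.inr j) = Sum.inr j' →
      (((x' = 0 ∧ j'.1 ≠ 0 ∧ j'.1 ≠ 2) ∨ (x' = 1 ∧ (j'.1 = 1 ∨ j'.1 = 2))) ↔
        ((x = 0 ∧ j.1 ≠ 0 ∧ j.1 ≠ 2) ∨ (x = 1 ∧ (j.1 = 1 ∨ j.1 = 2)))) := by
    intro x x' j j' hx hj
    have := hφ (Sum.inl x) (Sum.inr j) (hadj x j)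
    rw [hx, hj] at this
    simp only [decide_eq_decide] at this
    rw [← eval_col m hm x' j', ← eval_col m hm x j]
    exact this
  -- Step C: φ fixes inl 0 (and hence inl 1)
  have ha : y0 = 0 := by
    by_contra hne
    have hy0' : y0 = 1 := by omega
    -- images of inr 1, inr 3, inr 4 must all go to indices 1 or 2
    have key : ∀ j : Fin m, j.1 ≠ 0 → j.1 ≠ 2 → ∀ j' : Fin m,
        φ (Sum.inr j) = Sum.inr j' → j'.1 = 1 ∨ j'.1 = 2 := by
      intro j hj0 hj2 j' hj'
      have := (hcol 0 y0 j j' hy0 hj').2 (Or.inl ⟨rfl, hj0, hj2⟩)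
      rw [hy0'] at this
      rcases this with ⟨h, _⟩ | ⟨_, h⟩
      · exact absurd h (by simp [Fin.ext_iff])
      · exact h
    obtain ⟨k1, hk1⟩ := hright ⟨1, by omega⟩
    obtain ⟨k3, hk3⟩ := hright ⟨3, by omega⟩
    obtain ⟨k4, hk4⟩ := hright ⟨4, by omega⟩
    have h1 := key ⟨1, by omega⟩ (by simp) (by simp) k1 hk1
    have h3 := key ⟨3, by omega⟩ (by simp) (by simp) k3 hk3
    have h4 := key ⟨4, by omega⟩ (by simp) (by simp) k4 hk4
    have hc : k1 = k3 ∨ k1 = k4 ∨ k3 = k4 := by omega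
    rcases hc with hc | hc | hc
    · have := hinj (hk1.trans (hc ▸ hk3.symm)); simp [Fin.ext_iff] at this
    · have := hinj (hk1.trans (hc ▸ hk4.symm)); simp [Fin.ext_iff] at this
    · have := hinj (hk3.trans (hc ▸ hk4.symm)); simp [Fin.ext_iff] at this
  have hc1 : y1 = 1 := by omega
  rw [ha] at hy0; rw [hc1] at hy1
  -- Step D: right vertices 0,1,2 are fixed
  obtain ⟨k0, hk0⟩ := hright ⟨0, by omega⟩
  obtain ⟨k1, hk1⟩ := hright ⟨1, by omega⟩
  obtain ⟨k2, hk2⟩ := hright ⟨2, by omega⟩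
  have cA0 := hcol 0 0 ⟨0, by omega⟩ k0 hy0 hk0
  have cC0 := hcol 1 1 ⟨0, by omega⟩ k0 hy1 hk0
  have cA1 := hcol 0 0 ⟨1, by omega⟩ k1 hy0 hk1
  have cC1 := hcol 1 1 ⟨1, by omega⟩ k1 hy1 hk1
  have cA2 := hcol 0 0 ⟨2, by omega⟩ k2 hy0 hk2
  have cC2 := hcol 1 1 ⟨2, by omega⟩ k2 hy1 hk2
  simp [Fin.ext_iff] at cA0 cC0 cA1 cC1 cA2 cC2
  have hk0' : k0.1 = 0 := by omega
  have hk1' : k1.1 = 1 := by omega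
  have hk2' : k2.1 = 2 := by omega
  refine ⟨hy0, hy1, ?_, ?_, ?_⟩
  · rw [hk0]; congr 1; exact Fin.ext hk0'
  · rw [hk1]; congr 1; exact Fin.ext hk1'
  · rw [hk2]; congr 1; exact Fin.ext hk2'
end

section
/- Let G be a simple graph with pairwise distinct vertices a, b, c, v, x such that G contains the edges ab, bc, cv, va, and ax, and such that x and c are NOT adjacent in G. Color the four edges ax, ab, bc, and cv grey (they form a path x–a–b–c–v) and all other edges of G black. Then every color-preserving automorphism of this 2-colored graph fixes each of the vertices a, b, c, v, and x. -/
set_option maxHeartbeats 1600000 in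
/-- Let `G` be a simple graph with pairwise distinct vertices `a, b, c, v, x`,
containing the edges `ab`, `bc`, `cv`, `va`, `ax`, and with `x` and `c` not
adjacent.  Color the four edges `ax`, `ab`, `bc`, `cv` grey (a path
`x–a–b–c–v`) and all other edges black.  Then every color-preserving
automorphism of this 2-colored graph fixes each of `a`, `b`, `c`, `v`, `x`. -/
theorem stmt_13 {V : Type*} [DecidableEq V] (G : SimpleGraph V)
    (a b c v x : V) (hdist : List.Pairwise (· ≠ ·) [a, b, c, v, x])
    (hab : G.Adj a b) (hbc : G.Adj b c) (hcv : G.Adj c v) (hva : G.Adj v a)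
    (hax : G.Adj a x) (hxc : ¬ G.Adj x c)
    (φ : G ≃g G)
    (hφ : IsColorPreserving G
      (fun e => decide (e = s(a, x) ∨ e = s(a, b) ∨ e = s(b, c) ∨ e = s(c, v))) φ) :
    φ a = a ∧ φ b = b ∧ φ c = c ∧ φ v = v ∧ φ x = x := by
  simp only [List.pairwise_cons, List.mem_cons, List.mem_singleton,
    List.not_mem_nil] at hdist
  obtain ⟨h1', h2', h3', h4', -⟩ := hdist
  have hab' : a ≠ b := h1' b (by simp)
  have hac' : a ≠ c := h1' c (by simp)
  have hav' : a ≠ v := h1' v (by simp)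
  have hax' : a ≠ x := h1' x (by simp)
  have hbc' : b ≠ c := h2' c (by simp)
  have hbv' : b ≠ v := h2' v (by simp)
  have hbx' : b ≠ x := h2' x (by simp)
  have hcv' : c ≠ v := h3' v (by simp)
  have hcx' : c ≠ x := h3' x (by simp)
  have hvx' : v ≠ x := h4' x (by simp)
  have hinj : ∀ u w : V, φ u = φ w ↔ u = w := fun u w => φ.toEquiv.apply_eq_iff_eq
  have iab : φ a ≠ φ b := fun h => hab' ((hinj _ _).mp h)
  have iac : φ a ≠ φ c := fun h => hac' ((hinj _ _).mp h)
  have iav : φ a ≠ φ v := fun h => hav' ((hinj _ _).mp h)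
  have iax : φ a ≠ φ x := fun h => hax' ((hinj _ _).mp h)
  have ibc : φ b ≠ φ c := fun h => hbc' ((hinj _ _).mp h)
  have ibv : φ b ≠ φ v := fun h => hbv' ((hinj _ _).mp h)
  have ibx : φ b ≠ φ x := fun h => hbx' ((hinj _ _).mp h)
  have icv : φ c ≠ φ v := fun h => hcv' ((hinj _ _).mp h)
  have icx : φ c ≠ φ x := fun h => hcx' ((hinj _ _).mp h)
  have ivx : φ v ≠ φ x := fun h => hvx' ((hinj _ _).mp h)
  have hmap : G.Adj (φ v) (φ a) := φ.map_adj_iff.mpr hva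
  have h1 : s(φ a, φ x) = s(a,x) ∨ s(φ a, φ x) = s(a,b) ∨ s(φ a, φ x) = s(b,c)
      ∨ s(φ a, φ x) = s(c,v) :=
    of_decide_eq_true ((hφ a x hax).trans (by simp))
  have h2 : s(φ a, φ b) = s(a,x) ∨ s(φ a, φ b) = s(a,b) ∨ s(φ a, φ b) = s(b,c)
      ∨ s(φ a, φ b) = s(c,v) :=
    of_decide_eq_true ((hφ a b hab).trans (by simp))
  have h3 : s(φ b, φ c) = s(a,x) ∨ s(φ b, φ c) = s(a,b) ∨ s(φ b, φ c) = s(b,c)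
      ∨ s(φ b, φ c) = s(c,v) :=
    of_decide_eq_true ((hφ b c hbc).trans (by simp))
  have h4 : s(φ c, φ v) = s(a,x) ∨ s(φ c, φ v) = s(a,b) ∨ s(φ c, φ v) = s(b,c)
      ∨ s(φ c, φ v) = s(c,v) :=
    of_decide_eq_true ((hφ c v hcv).trans (by simp))
  clear hφ
  simp only [Sym2.eq_iff] at h1 h2 h3 h4
  rcases h2 with (⟨p,q⟩|⟨p,q⟩)|(⟨p,q⟩|⟨p,q⟩)|(⟨p,q⟩|⟨p,q⟩)|(⟨p,q⟩|⟨p,q⟩) <;>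
    rcases h3 with (⟨r,s⟩|⟨r,s⟩)|(⟨r,s⟩|⟨r,s⟩)|(⟨r,s⟩|⟨r,s⟩)|(⟨r,s⟩|⟨r,s⟩) <;>
    try solve | simp_all
  all_goals
    rcases h1 with (⟨t,u⟩|⟨t,u⟩)|(⟨t,u⟩|⟨t,u⟩)|(⟨t,u⟩|⟨t,u⟩)|(⟨t,u⟩|⟨t,u⟩) <;>
    try solve | simp_all
  all_goals
    rcases h4 with (⟨m,n⟩|⟨m,n⟩)|(⟨m,n⟩|⟨m,n⟩)|(⟨m,n⟩|⟨m,n⟩)|(⟨m,n⟩|⟨m,n⟩) <;>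
    simp_all
end
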